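/- Let A and B be positive real numbers with B/A = 6/5, let π denote the prime counting function, and suppose that A·(x/log x) ≤ π(x) ≤ B·(x/log x) for all real x > 30. Let a > 6/5 be a real number and let p > max(30, a^(6/(5a−6))) be a prime. Then there exists a prime q with p < q ≤ a·p; in particular the smallest prime exceeding p is at most a·p. -/
import Mathlib


open Real

theorem stmt_4 (A B : ℝ) (hA : 0 < A) (hB : 0 < B) (hBA : B / A = 6 / 5)
    (hpi : ∀ x : ℝ, 30 < x →
      A * (x / Real.log x) ≤ (Nat.primeCounting ⌊x⌋₊ : ℝ) ∧
        (Nat.primeCounting ⌊x⌋₊ : ℝ) ≤ B * (x / Real.log x))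
    (a : ℝ) (ha : 6 / 5 < a) (p : ℕ) (hp : p.Prime)
    (hplarge : max 30 (a ^ (6 / (5 * a - 6))) < (p : ℝ)) :
    ∃ q : ℕ, q.Prime ∧ p < q ∧ (q : ℝ) ≤ a * p := by
  have h30p : (30:ℝ) < p := lt_of_le_of_lt (le_max_left _ _) hplarge
  have hap : a ^ (6 / (5 * a - 6)) < (p:ℝ) := lt_of_le_of_lt (le_max_right _ _) hplarge
  have ha1 : (1:ℝ) < a := by linarith
  have hp0 : (0:ℝ) < p := by linarith
  have h5a6 : (0:ℝ) < 5 * a - 6 := by linarith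
  have hloga : 0 < Real.log a := Real.log_pos ha1
  have hlogp : 0 < Real.log p := Real.log_pos (by linarith)
  have hlogap : Real.log (a * p) = Real.log a + Real.log p :=
    Real.log_mul (by linarith) (ne_of_gt hp0)
  have hkey : 6 * Real.log a < (5 * a - 6) * Real.log p := by
    have h := Real.log_lt_log (Real.rpow_pos_of_pos (by linarith : (0:ℝ) < a) _) hap
    rw [Real.log_rpow (by linarith : (0:ℝ) < a)] at h
    calc 6 * Real.log a = (5*a-6) * (6/(5*a-6) * Real.log a) := by
          field_simp
        _ < (5*a-6) * Real.log p := mul_lt_mul_of_pos_left h h5a6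
  have hBA' : B = 6/5 * A := by
    field_simp at hBA; linarith
  have hap30 : (30:ℝ) < a * p := by nlinarith
  obtain ⟨hlo, -⟩ := hpi (a * p) hap30
  obtain ⟨-, hhi⟩ := hpi p h30p
  rw [Nat.floor_natCast] at hhi
  have hsum : 0 < Real.log a + Real.log p := by linarith
  have hmid : B * ((p:ℝ) / Real.log p) < A * (a * p / Real.log (a * p)) := by
    rw [hlogap, mul_div_assoc', mul_div_assoc', div_lt_div_iff₀ hlogp hsum]
    rw [hBA']
    nlinarith [mul_lt_mul_of_pos_left hkey (mul_pos hA hp0)]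
  have hmain : (Nat.primeCounting p : ℝ) < (Nat.primeCounting ⌊a * p⌋₊ : ℝ) :=
    lt_of_le_of_lt hhi (lt_of_lt_of_le hmid hlo)
  have hcount : Nat.primeCounting p < Nat.primeCounting ⌊a * p⌋₊ := by exact_mod_cast hmain
  by_contra hcon
  push_neg at hcon
  -- hcon : ∀ q, q.Prime → p < q → a * p < q
  apply absurd hcount
  push_neg
  have hsubset : (Finset.range (⌊a * p⌋₊ + 1)).filter Nat.Prime ⊆
      (Finset.range (p + 1)).filter Nat.Prime := by
    intro q hq
    simp only [Finset.mem_filter, Finset.mem_range] at hq ⊢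
    refine ⟨?_, hq.2⟩
    by_contra hqp
    push_neg at hqp
    have hpq : p < q := by omega
    have h1 : (q:ℝ) ≤ a * p := by
      calc (q:ℝ) ≤ (⌊a * p⌋₊ : ℝ) := by exact_mod_cast Nat.lt_succ_iff.mp hq.1
        _ ≤ a * p := Nat.floor_le (by positivity)
    exact absurd h1 (not_le.mpr (hcon q hq.2 hpq))
  calc Nat.primeCounting ⌊a * p⌋₊ = ((Finset.range (⌊a * p⌋₊ + 1)).filter Nat.Prime).card := by
        rw [Nat.primeCounting, Nat.primeCounting', Nat.count_eq_card_filter_range]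
    _ ≤ ((Finset.range (p + 1)).filter Nat.Prime).card := Finset.card_le_card hsubset
    _ = Nat.primeCounting p := by
        rw [Nat.primeCounting, Nat.primeCounting', Nat.count_eq_card_filter_range]
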